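/- arXiv:1709.08826 — 4 statements merged into one kernel-verified Lean document; each statement's English description precedes it below -/
import Mathlib

section
/- Monotonicity of the composed Kalman filter recursion: if Σ_{t|t} ⪯ Σ'_{t|t} are positive definite, then one full step of the Kalman recursion preserves the order, i.e., Σ_{t+1|t+1} = ((A·Σ_{t|t}·Aᵀ + W)⁻¹ + CᵀV⁻¹C)⁻¹ ⪯ Σ'_{t+1|t+1} = ((A·Σ'_{t|t}·Aᵀ + W)⁻¹ + CᵀV⁻¹C)⁻¹. -/
open Matrix

namespace Matrix.PosSemidef

open scoped MatrixOrder

noncomputable def sqrt {n : ℕ} {A : Matrix (Fin n) (Fin n) ℝ} (_h : A.PosSemidef) :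
    Matrix (Fin n) (Fin n) ℝ := CFC.sqrt A

lemma sqrt_mul_self {n : ℕ} {A : Matrix (Fin n) (Fin n) ℝ} (h : A.PosSemidef) :
    h.sqrt * h.sqrt = A := CFC.sqrt_mul_sqrt_self A h.nonneg

lemma posSemidef_sqrt {n : ℕ} {A : Matrix (Fin n) (Fin n) ℝ} (h : A.PosSemidef) :
    h.sqrt.PosSemidef := (CFC.sqrt_nonneg A).posSemidef

end Matrix.PosSemidef

namespace KalmanAux

variable {n : ℕ}

lemma conj_posDef {A S : Matrix (Fin n) (Fin n) ℝ} (hA : A.PosDef) (hS : IsUnit S.det) :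
    (Sᴴ * A * S).PosDef := by
  have hSu : IsUnit S := (Matrix.isUnit_iff_isUnit_det S).2 hS
  have hinj : Function.Injective (S.mulVec) := Matrix.mulVec_injective_iff_isUnit.mpr hSu
  exact hA.conjTranspose_mul_mul_same hinj

lemma sqrt_inv_conj {P : Matrix (Fin n) (Fin n) ℝ} (hP : P.PosDef) :
    (hP.inv.posSemidef).sqrt * P * (hP.inv.posSemidef).sqrt = 1 := by
  set U := (hP.inv.posSemidef).sqrt with hUdef
  have hUU : U * U = P⁻¹ := (hP.inv.posSemidef).sqrt_mul_self
  have hPdet : IsUnit P.det := hP.det_pos.ne'.isUnit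
  have h1 : U * P⁻¹ = P⁻¹ * U := by rw [← hUU, mul_assoc]
  have comm : U * P = P * U := by
    calc U * P = (P * P⁻¹) * U * P := by rw [mul_nonsing_inv P hPdet, one_mul]
      _ = P * (P⁻¹ * U) * P := by rw [mul_assoc P P⁻¹ U]
      _ = P * (U * P⁻¹) * P := by rw [← h1]
      _ = P * U * (P⁻¹ * P) := by simp only [mul_assoc]
      _ = P * U := by rw [nonsing_inv_mul P hPdet, mul_one]
  calc U * P * U = P * U * U := by rw [comm]
    _ = P * (U * U) := by rw [mul_assoc]
    _ = P * P⁻¹ := by rw [hUU]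
    _ = 1 := mul_nonsing_inv P hPdet

lemma inv_sub_inv {A B : Matrix (Fin n) (Fin n) ℝ} (hA : A.PosDef) (hB : B.PosDef)
    (h : (B - A).PosSemidef) : (A⁻¹ - B⁻¹).PosSemidef := by
  set S := (hB.inv.posSemidef).sqrt with hSdef
  have hSS : S * S = B⁻¹ := (hB.inv.posSemidef).sqrt_mul_self
  have hSB : S * B * S = 1 := sqrt_inv_conj hB
  have hSH : Sᴴ = S := (hB.inv.posSemidef).posSemidef_sqrt.1
  have hSdetU : IsUnit S.det := by
    have hd : S.det * (B.det * S.det) = 1 := by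
      have := congrArg Matrix.det hSB
      simpa [det_mul, mul_assoc] using this
    exact IsUnit.of_mul_eq_one _ hd
  have hM : (S * A * S).PosDef := by
    have := conj_posDef hA hSdetU
    rwa [hSH] at this
  set M := S * A * S with hMdef
  have h1M : (1 - M).PosSemidef := by
    have hc := h.conjTranspose_mul_mul_same S
    rw [hSH] at hc
    have e : S * (B - A) * S = 1 - M := by
      rw [Matrix.mul_sub, Matrix.sub_mul, hSB, ← hMdef]
    rwa [e] at hc
  set U := (hM.inv.posSemidef).sqrt with hUdef
  have hUU : U * U = M⁻¹ := (hM.inv.posSemidef).sqrt_mul_self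
  have hUM : U * M * U = 1 := sqrt_inv_conj hM
  have hUH : Uᴴ = U := (hM.inv.posSemidef).posSemidef_sqrt.1
  have hMinv : (M⁻¹ - 1).PosSemidef := by
    have hc := h1M.conjTranspose_mul_mul_same U
    rw [hUH] at hc
    have e : U * (1 - M) * U = M⁻¹ - 1 := by
      rw [Matrix.mul_sub, Matrix.mul_one, Matrix.sub_mul, hUU, hUM]
    rwa [e] at hc
  have hSi : S * S⁻¹ = 1 := mul_nonsing_inv S hSdetU
  have hiS : S⁻¹ * S = 1 := nonsing_inv_mul S hSdetU
  have hAinv : S * M⁻¹ * S = A⁻¹ := by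
    rw [hMdef, Matrix.mul_inv_rev, Matrix.mul_inv_rev]
    calc S * (S⁻¹ * (A⁻¹ * S⁻¹)) * S
        = (S * S⁻¹) * A⁻¹ * (S⁻¹ * S) := by simp only [mul_assoc]
      _ = A⁻¹ := by rw [hSi, hiS, one_mul, mul_one]
  have hc := hMinv.conjTranspose_mul_mul_same S
  rw [hSH] at hc
  have e : S * (M⁻¹ - 1) * S = A⁻¹ - B⁻¹ := by
    rw [Matrix.mul_sub, Matrix.mul_one, Matrix.sub_mul, hAinv, hSS]
  rwa [e] at hc

end KalmanAux

theorem kalman_step_monotone {n p : ℕ}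
    (Sig Sig' A W : Matrix (Fin n) (Fin n) ℝ)
    (C : Matrix (Fin p) (Fin n) ℝ) (V : Matrix (Fin p) (Fin p) ℝ)
    (hSig : Sig.PosDef) (hSig' : Sig'.PosDef) (hW : W.PosDef) (hV : V.PosDef)
    (hle : (Sig' - Sig).PosSemidef) :
    (((A * Sig' * Aᵀ + W)⁻¹ + Cᵀ * V⁻¹ * C)⁻¹
      - ((A * Sig * Aᵀ + W)⁻¹ + Cᵀ * V⁻¹ * C)⁻¹).PosSemidef := by
  have hP : (A * Sig * Aᵀ + W).PosDef := by
    have h1 := hSig.posSemidef.mul_mul_conjTranspose_same A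
    rw [conjTranspose_eq_transpose_of_trivial] at h1
    exact Matrix.PosDef.posSemidef_add h1 hW
  have hP' : (A * Sig' * Aᵀ + W).PosDef := by
    have h1 := hSig'.posSemidef.mul_mul_conjTranspose_same A
    rw [conjTranspose_eq_transpose_of_trivial] at h1
    exact Matrix.PosDef.posSemidef_add h1 hW
  have hK : (Cᵀ * V⁻¹ * C).PosSemidef := by
    have h1 := hV.inv.posSemidef.conjTranspose_mul_mul_same C
    rwa [conjTranspose_eq_transpose_of_trivial] at h1
  have hPP' : ((A * Sig' * Aᵀ + W) - (A * Sig * Aᵀ + W)).PosSemidef := by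
    have h1 := hle.mul_mul_conjTranspose_same A
    rw [conjTranspose_eq_transpose_of_trivial] at h1
    have e : A * (Sig' - Sig) * Aᵀ = (A * Sig' * Aᵀ + W) - (A * Sig * Aᵀ + W) := by
      noncomm_ring
    rwa [e] at h1
  have hinv1 : ((A * Sig * Aᵀ + W)⁻¹ - (A * Sig' * Aᵀ + W)⁻¹).PosSemidef :=
    KalmanAux.inv_sub_inv hP hP' hPP'
  have hN : ((A * Sig * Aᵀ + W)⁻¹ + Cᵀ * V⁻¹ * C).PosDef :=
    Matrix.PosDef.add_posSemidef hP.inv hK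
  have hN' : ((A * Sig' * Aᵀ + W)⁻¹ + Cᵀ * V⁻¹ * C).PosDef :=
    Matrix.PosDef.add_posSemidef hP'.inv hK
  have hNN' : (((A * Sig * Aᵀ + W)⁻¹ + Cᵀ * V⁻¹ * C)
      - ((A * Sig' * Aᵀ + W)⁻¹ + Cᵀ * V⁻¹ * C)).PosSemidef := by
    have e : ((A * Sig * Aᵀ + W)⁻¹ + Cᵀ * V⁻¹ * C)
        - ((A * Sig' * Aᵀ + W)⁻¹ + Cᵀ * V⁻¹ * C)
        = (A * Sig * Aᵀ + W)⁻¹ - (A * Sig' * Aᵀ + W)⁻¹ := by abel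
    rwa [e]
  exact KalmanAux.inv_sub_inv hN' hN hNN'
end

section
/- Monotonicity (nonincreasingness) of the LQG sensor-selection cost: for sensor sets S1 ⊆ S2 ⊆ V, it holds that Σ_{t=1}^{T} tr(Θ_t · Σ_{t|t}(S1)) ≥ Σ_{t=1}^{T} tr(Θ_t · Σ_{t|t}(S2)), where Σ_{t|t}(S) are the Kalman filter error covariances computed with sensor set S and Θ_t are positive semidefinite weight matrices. -/
open Matrix

section AuxLQG

variable {m : Type*} [Fintype m] [DecidableEq m]

open scoped MatrixOrder

lemma psd_trace_nonneg' {M : Matrix m m ℝ} (h : M.PosSemidef) : 0 ≤ M.trace := by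
  rw [Matrix.trace]
  apply Finset.sum_nonneg
  intro i _
  exact h.diag_nonneg

lemma psd_trace_mul_nonneg' {A B : Matrix m m ℝ} (hA : A.PosSemidef) (hB : B.PosSemidef) :
    0 ≤ (A * B).trace := by
  obtain ⟨D, hD⟩ := CStarAlgebra.nonneg_iff_eq_star_mul_self.mp hA.nonneg
  rw [hD, Matrix.mul_assoc, Matrix.trace_mul_comm]
  exact psd_trace_nonneg' (hB.mul_mul_conjTranspose_same D)

lemma inv_antitone' {X Y : Matrix m m ℝ} (hX : X.PosDef) (hY : Y.PosDef)
    (h : (Y - X).PosSemidef) : (X⁻¹ - Y⁻¹).PosSemidef := by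
  set W := CFC.sqrt X with hWdef
  set Z := Y⁻¹ with hZdef
  have hWH : Wᴴ = W := (CFC.sqrt_nonneg X).posSemidef.isHermitian
  have hWW : W * W = X := CFC.sqrt_mul_sqrt_self X hX.posSemidef.nonneg
  have hdetW : IsUnit W.det := by
    have : IsUnit (W.det * W.det) := by
      rw [← Matrix.det_mul, hWW]; exact isUnit_iff_ne_zero.mpr hX.det_pos.ne'
    exact isUnit_of_mul_isUnit_left this
  have hWiW : W⁻¹ * W = 1 := Matrix.nonsing_inv_mul W hdetW
  have hWWi : W * W⁻¹ = 1 := Matrix.mul_nonsing_inv W hdetW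
  have hZH : Zᴴ = Z := (hY.inv).isHermitian
  have hWiH : (W⁻¹)ᴴ = W⁻¹ := by rw [Matrix.conjTranspose_nonsing_inv, hWH]
  have hYdet : IsUnit Y.det := isUnit_iff_ne_zero.mpr hY.det_pos.ne'
  have hZYZ : Z * Y * Z = Z := by
    rw [hZdef, Matrix.nonsing_inv_mul Y hYdet, Matrix.one_mul]
  have hE : (W⁻¹ - W * Z)ᴴ * (W⁻¹ - W * Z) = X⁻¹ - Z - Z + Z * X * Z := by
    rw [Matrix.conjTranspose_sub, Matrix.conjTranspose_mul, hWiH, hZH, hWH,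
      Matrix.sub_mul, Matrix.mul_sub, Matrix.mul_sub]
    have h1 : W⁻¹ * W⁻¹ = X⁻¹ := by rw [← hWW, Matrix.mul_inv_rev]
    have h2 : W⁻¹ * (W * Z) = Z := by rw [← Matrix.mul_assoc, hWiW, Matrix.one_mul]
    have h3 : Z * W * W⁻¹ = Z := by rw [Matrix.mul_assoc, hWWi, Matrix.mul_one]
    have h4 : Z * W * (W * Z) = Z * X * Z := by
      rw [Matrix.mul_assoc, ← Matrix.mul_assoc W W Z, hWW, ← Matrix.mul_assoc]
    rw [h1, h2, h3, h4]
    abel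
  have hkey : X⁻¹ - Y⁻¹ = (W⁻¹ - W * Z)ᴴ * (W⁻¹ - W * Z) + Zᴴ * (Y - X) * Z := by
    rw [hE, hZH, Matrix.mul_sub, Matrix.sub_mul, hZYZ, ← hZdef]
    abel
  rw [hkey]
  exact (Matrix.posSemidef_conjTranspose_mul_self _).add (h.conjTranspose_mul_mul_same Z)

omit [DecidableEq m] in
lemma psd_sum' {ι : Type*} {s : Finset ι} {f : ι → Matrix m m ℝ}
    (hf : ∀ i ∈ s, (f i).PosSemidef) : (∑ i ∈ s, f i).PosSemidef := by
  classical
  induction s using Finset.induction_on with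
  | empty => simpa using Matrix.PosSemidef.zero
  | insert _ _ hx ih =>
    rw [Finset.sum_insert hx]
    exact (hf _ (Finset.mem_insert_self _ _)).add
      (ih fun i hi => hf i (Finset.mem_insert_of_mem hi))

end AuxLQG

/-- Monotonicity of the LQG sensor-selection cost in the sensor set.
The filtered covariances `Sf S t` and predicted covariances `Sp S t`
(times `t = 0, 1, …, T-1`) follow the Kalman recursion with common initial
predicted covariance `Sig10`, and `Θ t` are positive semidefinite weights. -/
theorem lqg_cost_monotone {n : ℕ} {ι : Type*} [Fintype ι] [DecidableEq ι]
    {p : ι → ℕ} (T : ℕ)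
    (A W : ℕ → Matrix (Fin n) (Fin n) ℝ)
    (Sig10 : Matrix (Fin n) (Fin n) ℝ)
    (C : ∀ i : ι, ℕ → Matrix (Fin (p i)) (Fin n) ℝ)
    (V : ∀ i : ι, ℕ → Matrix (Fin (p i)) (Fin (p i)) ℝ)
    (Θ : ℕ → Matrix (Fin n) (Fin n) ℝ)
    (Sf Sp : Finset ι → ℕ → Matrix (Fin n) (Fin n) ℝ)
    (hSig10 : Sig10.PosDef) (hW : ∀ t, (W t).PosDef)
    (hV : ∀ i t, (V i t).PosDef)
    (hΘ : ∀ t, (Θ t).PosSemidef)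
    (hinit : ∀ S : Finset ι, Sp S 0 = Sig10)
    (hupd : ∀ (S : Finset ι) (t : ℕ),
      Sf S t = ((Sp S t)⁻¹ + ∑ i ∈ S, (C i t)ᵀ * (V i t)⁻¹ * C i t)⁻¹)
    (hpred : ∀ (S : Finset ι) (t : ℕ),
      Sp S (t + 1) = A t * Sf S t * (A t)ᵀ + W t)
    (S1 S2 : Finset ι) (hsub : S1 ⊆ S2) :
    ∑ t ∈ Finset.range T, (Θ t * Sf S2 t).trace ≤
      ∑ t ∈ Finset.range T, (Θ t * Sf S1 t).trace := by
  -- information matrices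
  set I : Finset ι → ℕ → Matrix (Fin n) (Fin n) ℝ :=
    fun S t => ∑ i ∈ S, (C i t)ᵀ * (V i t)⁻¹ * C i t with hI
  have hterm : ∀ (i : ι) (t : ℕ), ((C i t)ᵀ * (V i t)⁻¹ * C i t).PosSemidef := by
    intro i t
    have := ((hV i t).inv.posSemidef).conjTranspose_mul_mul_same (C i t)
    rwa [Matrix.conjTranspose_eq_transpose_of_trivial] at this
  have hIpsd : ∀ (S : Finset ι) (t : ℕ), (I S t).PosSemidef :=
    fun S t => psd_sum' fun i _ => hterm i t
  have hIdiff : ∀ t, (I S2 t - I S1 t).PosSemidef := by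
    intro t
    have hsp : I S2 t - I S1 t = ∑ i ∈ S2 \ S1, (C i t)ᵀ * (V i t)⁻¹ * C i t := by
      simp only [hI]
      have := Finset.sum_sdiff (f := fun i => (C i t)ᵀ * (V i t)⁻¹ * C i t) hsub
      rw [← this]; abel
    rw [hsp]
    exact psd_sum' fun i _ => hterm i t
  -- filtered-step facts, given predicted-step facts
  have hfstep : ∀ t, (Sp S1 t).PosDef → (Sp S2 t).PosDef →
      (Sp S1 t - Sp S2 t).PosSemidef →
      (Sf S1 t).PosDef ∧ (Sf S2 t).PosDef ∧ (Sf S1 t - Sf S2 t).PosSemidef := by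
    intro t h1 h2 h3
    have hM1 : ((Sp S1 t)⁻¹ + I S1 t).PosDef := h1.inv.add_posSemidef (hIpsd S1 t)
    have hM2 : ((Sp S2 t)⁻¹ + I S2 t).PosDef := h2.inv.add_posSemidef (hIpsd S2 t)
    have hMdiff : (((Sp S2 t)⁻¹ + I S2 t) - ((Sp S1 t)⁻¹ + I S1 t)).PosSemidef := by
      have hinv : ((Sp S2 t)⁻¹ - (Sp S1 t)⁻¹).PosSemidef := inv_antitone' h2 h1 h3
      have := hinv.add (hIdiff t)
      convert this using 1
      abel
    refine ⟨?_, ?_, ?_⟩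
    · rw [hupd]; exact hM1.inv
    · rw [hupd]; exact hM2.inv
    · rw [hupd, hupd]; exact inv_antitone' hM1 hM2 hMdiff
  -- main induction on predicted covariances
  have hmain : ∀ t, (Sp S1 t).PosDef ∧ (Sp S2 t).PosDef ∧
      (Sp S1 t - Sp S2 t).PosSemidef := by
    intro t
    induction t with
    | zero =>
      refine ⟨by rw [hinit]; exact hSig10, by rw [hinit]; exact hSig10, ?_⟩
      rw [hinit, hinit, sub_self]
      exact Matrix.PosSemidef.zero
    | succ t ih =>
      obtain ⟨h1, h2, h3⟩ := ih
      obtain ⟨hf1, hf2, hf3⟩ := hfstep t h1 h2 h3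
      have hAH : (A t)ᵀ = (A t)ᴴ :=
        (Matrix.conjTranspose_eq_transpose_of_trivial (A t)).symm
      refine ⟨?_, ?_, ?_⟩
      · rw [hpred, hAH]
        exact Matrix.PosDef.posSemidef_add ((hf1.posSemidef).mul_mul_conjTranspose_same (A t)) (hW t)
      · rw [hpred, hAH]
        exact Matrix.PosDef.posSemidef_add ((hf2.posSemidef).mul_mul_conjTranspose_same (A t)) (hW t)
      · rw [hpred, hpred]
        have hd : (A t * Sf S1 t * (A t)ᵀ + W t) - (A t * Sf S2 t * (A t)ᵀ + W t)
            = A t * (Sf S1 t - Sf S2 t) * (A t)ᵀ := by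
          rw [Matrix.mul_sub, Matrix.sub_mul]; abel
        rw [hd, hAH]
        exact hf3.mul_mul_conjTranspose_same (A t)
  -- conclude termwise
  apply Finset.sum_le_sum
  intro t _
  obtain ⟨h1, h2, h3⟩ := hmain t
  obtain ⟨_, _, hf3⟩ := hfstep t h1 h2 h3
  have := psd_trace_mul_nonneg' (hΘ t) hf3
  rw [Matrix.mul_sub, Matrix.trace_sub] at this
  linarith
end

section
/- Riccati identity for the control weight matrices: for every t, Θ_t = A_tᵀ·S_t·A_t + Q_{t−1} − S_{t−1}, where the quantities come from the backward LQR Riccati recursion. -/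
open Matrix

/-- Riccati identity `Θ_t = A_tᵀ S_t A_t + Q_{t-1} - S_{t-1}` for the
backward LQR Riccati recursion. -/
theorem theta_riccati_identity {n m : ℕ}
    (A S N Q Θ : ℕ → Matrix (Fin n) (Fin n) ℝ)
    (B : ℕ → Matrix (Fin n) (Fin m) ℝ)
    (R M : ℕ → Matrix (Fin m) (Fin m) ℝ)
    (K : ℕ → Matrix (Fin m) (Fin n) ℝ)
    (hQ : ∀ t, (Q t).PosSemidef) (hR : ∀ t, (R t).PosDef)
    (hSpd : ∀ t, (S t).PosDef)
    (hS : ∀ t, S t = Q t + N (t + 1))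
    (hN : ∀ t, N t = (A t)ᵀ * ((S t)⁻¹ + B t * (R t)⁻¹ * (B t)ᵀ)⁻¹ * A t)
    (hM : ∀ t, M t = (B t)ᵀ * S t * B t + R t)
    (hK : ∀ t, K t = -((M t)⁻¹ * (B t)ᵀ * S t * A t))
    (hΘ : ∀ t, Θ t = (K t)ᵀ * M t * K t) :
    ∀ t : ℕ, 1 ≤ t → Θ t = (A t)ᵀ * S t * A t + Q (t - 1) - S (t - 1) := by
  intro t ht
  have hSsymm : (S t)ᵀ = S t := (hSpd t).isHermitian
  have hBSB : ((B t)ᵀ * S t * B t).PosSemidef := by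
    have := (hSpd t).posSemidef.conjTranspose_mul_mul_same (B t)
    rwa [Matrix.conjTranspose_eq_transpose_of_trivial] at this
  have hMpd : (M t).PosDef := by
    rw [hM t]; exact Matrix.PosDef.posSemidef_add hBSB (hR t)
  have hMu : IsUnit (M t) := hMpd.isUnit
  have hMdet : IsUnit (M t).det := (Matrix.isUnit_iff_isUnit_det _).mp hMu
  have hSdet : IsUnit (S t).det := (Matrix.isUnit_iff_isUnit_det _).mp (hSpd t).isUnit
  have hRdet : IsUnit (R t).det := (Matrix.isUnit_iff_isUnit_det _).mp (hR t).isUnit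
  have hMsymm : (M t)ᵀ = M t := hMpd.isHermitian
  -- Woodbury
  have hW : ((S t)⁻¹ + B t * (R t)⁻¹ * (B t)ᵀ)⁻¹
      = S t - S t * B t * (M t)⁻¹ * (B t)ᵀ * S t := by
    have key := Matrix.add_mul_mul_inv_eq_sub ((S t)⁻¹) (B t) ((R t)⁻¹) ((B t)ᵀ)
      ((hSpd t).inv.isUnit) ((hR t).inv.isUnit) ?_
    · rw [key, Matrix.nonsing_inv_nonsing_inv _ hSdet,
        Matrix.nonsing_inv_nonsing_inv _ hRdet, add_comm (R t), ← hM t]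
    · rw [Matrix.nonsing_inv_nonsing_inv _ hRdet,
        Matrix.nonsing_inv_nonsing_inv _ hSdet, add_comm (R t), ← hM t]
      exact hMu
  -- rewrite Θ
  have hKt : (K t)ᵀ = -((A t)ᵀ * S t * B t * (M t)⁻¹) := by
    rw [hK t]
    simp only [Matrix.transpose_neg, Matrix.transpose_mul, Matrix.transpose_nonsing_inv,
      hSsymm, hMsymm, Matrix.transpose_transpose]
    simp [Matrix.mul_assoc]
  have hΘt : Θ t = (A t)ᵀ * S t * B t * (M t)⁻¹ * (B t)ᵀ * S t * A t := by
    rw [hΘ t, hKt, hK t]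
    simp only [Matrix.neg_mul, Matrix.mul_neg, neg_neg]
    simp [Matrix.mul_assoc, Matrix.mul_nonsing_inv_cancel_left _ _ hMdet]
  -- rewrite RHS
  have hst : t - 1 + 1 = t := Nat.succ_pred_eq_of_pos ht
  have hS' : S (t - 1) = Q (t - 1) + N t := by rw [hS (t - 1), hst]
  rw [hΘt, hS', hN t, hW]
  simp only [Matrix.mul_sub, Matrix.sub_mul]
  abel_nf
  simp [Matrix.mul_assoc]
end

section
/- One-step information gain lower bound: let Ω be positive definite, Θ positive semidefinite symmetric, and C̄ a p×n matrix. Then tr(Θ·Ω⁻¹) − tr(Θ·(Ω + C̄ᵀC̄)⁻¹) = tr(Θ·Ω⁻¹C̄ᵀ(I + C̄Ω⁻¹C̄ᵀ)⁻¹C̄Ω⁻¹) ≥ λ_max(I + C̄Ω⁻¹C̄ᵀ)⁻¹ · tr(C̄Ω⁻¹ΘΩ⁻¹C̄ᵀ) ≥ 0. -/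
open Matrix

lemma psd_diag_nonneg {p : ℕ} {B : Matrix (Fin p) (Fin p) ℝ} (hB : B.PosSemidef)
    (i : Fin p) : 0 ≤ B i i := by
  have := hB.dotProduct_mulVec_nonneg (Pi.single i 1)
  simpa [dotProduct, mulVec, Pi.single_apply, Finset.mul_sum, mul_comm] using this

lemma psd_trace_nonneg {p : ℕ} {B : Matrix (Fin p) (Fin p) ℝ} (hB : B.PosSemidef) :
    0 ≤ B.trace := by
  exact Finset.sum_nonneg fun i _ => psd_diag_nonneg hB i

lemma key_trace_ineq {p : ℕ} [NeZero p] {M B : Matrix (Fin p) (Fin p) ℝ}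
    (hMp : M.PosDef) (hB : B.PosSemidef) (hM : M.IsHermitian) :
    (⨆ i, hM.eigenvalues i)⁻¹ * B.trace ≤ (M⁻¹ * B).trace := by
  set t := ⨆ i, hM.eigenvalues i with ht
  have hbdd : BddAbove (Set.range hM.eigenvalues) := Set.Finite.bddAbove (Set.finite_range _)
  have hpos : ∀ i, 0 < hM.eigenvalues i := fun i => hMp.eigenvalues_pos i
  have hle : ∀ i, hM.eigenvalues i ≤ t := fun i => le_ciSup hbdd i
  have htpos : 0 < t := lt_of_lt_of_le (hpos ⟨0, Nat.pos_of_neZero p⟩) (hle _)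
  set U : Matrix (Fin p) (Fin p) ℝ := (hM.eigenvectorUnitary : Matrix (Fin p) (Fin p) ℝ) with hU
  have hU1 : star U * U = 1 := (Matrix.mem_unitaryGroup_iff').mp hM.eigenvectorUnitary.2
  have hU2 : U * star U = 1 := (Matrix.mem_unitaryGroup_iff).mp hM.eigenvectorUnitary.2
  have spec : M = U * diagonal hM.eigenvalues * star U := by
    have := hM.spectral_theorem
    simpa [RCLike.ofReal_real_eq_id] using this
  have hMinv : M⁻¹ = U * diagonal (fun i => (hM.eigenvalues i)⁻¹) * star U := by
    apply Matrix.inv_eq_right_inv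
    have hdd : (star U * (U * diagonal (fun i => (hM.eigenvalues i)⁻¹))) =
        diagonal (fun i => (hM.eigenvalues i)⁻¹) := by
      rw [← mul_assoc, hU1, one_mul]
    calc M * (U * diagonal (fun i => (hM.eigenvalues i)⁻¹) * star U)
        = U * diagonal hM.eigenvalues * star U *
          (U * diagonal (fun i => (hM.eigenvalues i)⁻¹) * star U) := by rw [← spec]
      _ = U * (diagonal hM.eigenvalues * (star U * (U *
            diagonal (fun i => (hM.eigenvalues i)⁻¹)))) * star U := by
          simp only [mul_assoc]
      _ = U * (diagonal hM.eigenvalues * diagonal (fun i => (hM.eigenvalues i)⁻¹)) * star U := by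
          rw [hdd]
      _ = U * star U := by
          rw [diagonal_mul_diagonal]
          have : (fun i => hM.eigenvalues i * (hM.eigenvalues i)⁻¹) = fun _ => (1 : ℝ) := by
            funext i; exact mul_inv_cancel₀ (hpos i).ne'
          rw [this, diagonal_one, mul_one]
      _ = 1 := hU2
  set N : Matrix (Fin p) (Fin p) ℝ := star U * B * U with hN
  have hNpsd : N.PosSemidef := by
    have := hB.conjTranspose_mul_mul_same U
    simpa [hN, Matrix.star_eq_conjTranspose] using this
  have htraceN : N.trace = B.trace := by
    rw [hN, trace_mul_cycle, hU2, one_mul]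
  have htr : (M⁻¹ * B).trace = (diagonal (fun i => (hM.eigenvalues i)⁻¹) * N).trace := by
    rw [hMinv, hN]
    rw [show U * diagonal (fun i => (hM.eigenvalues i)⁻¹) * star U * B =
        U * (diagonal (fun i => (hM.eigenvalues i)⁻¹) * (star U * B)) by simp only [mul_assoc]]
    rw [trace_mul_comm]
    simp only [mul_assoc]
  have hdiagtr : (diagonal (fun i => (hM.eigenvalues i)⁻¹) * N).trace =
      ∑ i, (hM.eigenvalues i)⁻¹ * N i i := by
    simp [Matrix.trace, Matrix.diag, Matrix.mul_apply, Matrix.diagonal]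
  rw [htr, hdiagtr, ← htraceN]
  have : t⁻¹ * N.trace = ∑ i, t⁻¹ * N i i := by
    rw [Matrix.trace, Finset.mul_sum]; rfl
  rw [this]
  apply Finset.sum_le_sum
  intro i _
  exact mul_le_mul_of_nonneg_right
    (inv_anti₀ (hpos i) (hle i)) (psd_diag_nonneg hNpsd i)

theorem one_step_information_gain_bound {n p : ℕ} [NeZero p]
    (Ω Θ : Matrix (Fin n) (Fin n) ℝ) (C : Matrix (Fin p) (Fin n) ℝ)
    (hΩ : Ω.PosDef) (hΘ : Θ.PosSemidef)
    (hM : ((1 : Matrix (Fin p) (Fin p) ℝ) + C * Ω⁻¹ * Cᵀ).IsHermitian) :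
    (Θ * Ω⁻¹).trace - (Θ * (Ω + Cᵀ * C)⁻¹).trace =
        (Θ * Ω⁻¹ * Cᵀ * ((1 : Matrix (Fin p) (Fin p) ℝ) + C * Ω⁻¹ * Cᵀ)⁻¹ * C * Ω⁻¹).trace ∧
      (Θ * Ω⁻¹ * Cᵀ * ((1 : Matrix (Fin p) (Fin p) ℝ) + C * Ω⁻¹ * Cᵀ)⁻¹ * C * Ω⁻¹).trace ≥
        (⨆ i, hM.eigenvalues i)⁻¹ * (C * Ω⁻¹ * Θ * Ω⁻¹ * Cᵀ).trace ∧
      0 ≤ (⨆ i, hM.eigenvalues i)⁻¹ * (C * Ω⁻¹ * Θ * Ω⁻¹ * Cᵀ).trace := by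
  have hΩinv : (Ω⁻¹).PosDef := hΩ.inv
  have hpsd : (C * Ω⁻¹ * Cᵀ).PosSemidef := by
    have h := hΩinv.posSemidef.mul_mul_conjTranspose_same C
    rwa [show Cᴴ = Cᵀ from Matrix.conjTranspose_eq_transpose_of_trivial C] at h
  have hMpd : ((1 : Matrix (Fin p) (Fin p) ℝ) + C * Ω⁻¹ * Cᵀ).PosDef :=
    Matrix.PosDef.add_posSemidef (Matrix.PosDef.one) hpsd
  have hΩu : IsUnit Ω := (Matrix.isUnit_iff_isUnit_det Ω).mpr (isUnit_iff_ne_zero.mpr hΩ.det_pos.ne')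
  have hMu : IsUnit ((1 : Matrix (Fin p) (Fin p) ℝ) + C * Ω⁻¹ * Cᵀ) :=
    (Matrix.isUnit_iff_isUnit_det _).mpr (isUnit_iff_ne_zero.mpr hMpd.det_pos.ne')
  have woodbury : (Ω + Cᵀ * C)⁻¹ =
      Ω⁻¹ - Ω⁻¹ * Cᵀ * ((1 : Matrix (Fin p) (Fin p) ℝ) + C * Ω⁻¹ * Cᵀ)⁻¹ * C * Ω⁻¹ := by
    have h1 : Cᵀ * C = Cᵀ * (1 : Matrix (Fin p) (Fin p) ℝ) * C := by rw [Matrix.mul_one]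
    rw [h1, Matrix.add_mul_mul_inv_eq_sub Ω Cᵀ 1 C hΩu isUnit_one (by rwa [inv_one]),
      inv_one]
  have hBpsd : (C * Ω⁻¹ * Θ * Ω⁻¹ * Cᵀ).PosSemidef := by
    have := hΘ.mul_mul_conjTranspose_same (C * Ω⁻¹)
    have hCT : (C * Ω⁻¹)ᴴ = Ω⁻¹ * Cᵀ := by
      rw [conjTranspose_mul, hΩ.1.inv.eq, Matrix.conjTranspose_eq_transpose_of_trivial]
    rw [hCT] at this
    rwa [show C * Ω⁻¹ * Θ * (Ω⁻¹ * Cᵀ) = C * Ω⁻¹ * Θ * Ω⁻¹ * Cᵀ by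
      simp only [Matrix.mul_assoc]] at this
  have htreq : (Θ * Ω⁻¹ * Cᵀ * ((1 : Matrix (Fin p) (Fin p) ℝ) + C * Ω⁻¹ * Cᵀ)⁻¹ * C * Ω⁻¹).trace
      = (((1 : Matrix (Fin p) (Fin p) ℝ) + C * Ω⁻¹ * Cᵀ)⁻¹ *
          (C * Ω⁻¹ * Θ * Ω⁻¹ * Cᵀ)).trace := by
    rw [show Θ * Ω⁻¹ * Cᵀ * ((1 : Matrix (Fin p) (Fin p) ℝ) + C * Ω⁻¹ * Cᵀ)⁻¹ * C * Ω⁻¹ =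
      (Θ * Ω⁻¹ * Cᵀ) * (((1 : Matrix (Fin p) (Fin p) ℝ) + C * Ω⁻¹ * Cᵀ)⁻¹ * (C * Ω⁻¹)) by
        simp only [Matrix.mul_assoc]]
    rw [trace_mul_comm]
    congr 1
    simp only [Matrix.mul_assoc]
  refine ⟨?_, ?_, ?_⟩
  · rw [woodbury, Matrix.mul_sub, trace_sub, sub_sub_cancel]
    congr 1
    simp only [Matrix.mul_assoc]
  · rw [htreq]
    exact key_trace_ineq hMpd hBpsd hM
  · have htpos : 0 < (⨆ i, hM.eigenvalues i) := by
      have h0 : 0 < hM.eigenvalues ⟨0, Nat.pos_of_neZero p⟩ := hMpd.eigenvalues_pos _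
      exact lt_of_lt_of_le h0 (le_ciSup (Set.Finite.bddAbove (Set.finite_range _)) _)
    exact mul_nonneg (inv_nonneg.mpr htpos.le) (psd_trace_nonneg hBpsd)
end
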